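/- Suppose J ≡ ρ > 0 constant on Ω and β ∈ C(Ω̄) with β_max = max_{Ω̄} β attained but ρ ∫_Ω 1/(β_max − β(x)) dx < 1. Then the operator L v = ρ ∫_Ω v(y) dy − v + (β − μ)v admits no eigenvalue with a positive continuous eigenfunction on Ω̄. -/

import Mathlib

open MeasureTheory
open scoped ENNReal

/-- Counterexample criterion (Coville): if `J ≡ ρ` on `Ω` and
`ρ ∫_Ω (β_max - β(x))⁻¹ dx < 1`, then the operator
`Lv = ρ∫_Ω v - v + (β - μ)v` admits no eigenvalue with a positive continuous
eigenfunction on `Ω̄`; in particular it has no principal eigenvalue. -/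
theorem stmt_14 {N : ℕ}
    (Ω : Set (EuclideanSpace ℝ (Fin N))) (hΩo : IsOpen Ω)
    (hΩb : Bornology.IsBounded Ω) (hΩne : Ω.Nonempty)
    (ρ μ : ℝ) (hρ : 0 < ρ) (hμ : 0 < μ)
    (β : EuclideanSpace ℝ (Fin N) → ℝ) (hβc : ContinuousOn β (closure Ω))
    (x₀ : EuclideanSpace ℝ (Fin N)) (hx₀ : x₀ ∈ closure Ω)
    (hmax : ∀ x ∈ closure Ω, β x ≤ β x₀)
    (hcrit : ENNReal.ofReal ρ *
        (∫⁻ x in Ω, (ENNReal.ofReal (β x₀ - β x))⁻¹) < 1) :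
    ¬ ∃ (lam : ℝ) (v : EuclideanSpace ℝ (Fin N) → ℝ),
        ContinuousOn v (closure Ω) ∧ (∀ x ∈ closure Ω, 0 < v x) ∧
        ∀ x ∈ closure Ω,
          ρ * (∫ y in Ω, v y) - v x + (β x - μ) * v x = lam * v x := by
  rintro ⟨lam, v, hvc, hvpos, heq⟩
  have hsub : Ω ⊆ closure Ω := subset_closure
  set I : ℝ := ∫ y in Ω, v y with hI
  set c : ℝ := ρ * I with hc
  have hkey : ∀ x ∈ closure Ω, v x * (1 + μ + lam - β x) = c := by
    intro x hx
    have h := heq x hx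
    simp only [hc, hI]
    linear_combination -h
  have hInn : 0 ≤ I := by
    exact setIntegral_nonneg hΩo.measurableSet fun x hx => (hvpos x (hsub hx)).le
  have hμΩ : volume Ω ≠ 0 := (hΩo.measure_pos volume hΩne).ne'
  rcases hInn.lt_or_eq with hIpos | hI0
  · -- I > 0, so c > 0
    have hcpos : 0 < c := mul_pos hρ hIpos
    have hint : Integrable v (volume.restrict Ω) := by
      by_contra h
      rw [hI, integral_undef h] at hIpos
      exact lt_irrefl _ hIpos
    have hnn : 0 ≤ᵐ[volume.restrict Ω] v :=
      ae_restrict_of_forall_mem hΩo.measurableSet fun x hx => (hvpos x (hsub hx)).le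
    have hIl : ENNReal.ofReal I = ∫⁻ x in Ω, ENNReal.ofReal (v x) := by
      rw [hI]
      exact ofReal_integral_eq_lintegral_ofReal hint hnn
    have hx0pos : 0 < 1 + μ + lam - β x₀ := by
      have hk := hkey x₀ hx₀
      have hv := hvpos x₀ hx₀
      nlinarith
    have hptwise : ∀ x ∈ Ω, ENNReal.ofReal (v x) ≤
        ENNReal.ofReal c * (ENNReal.ofReal (β x₀ - β x))⁻¹ := by
      intro x hx
      rcases (hmax x (hsub hx)).lt_or_eq with hlt | heqβ
      · have hpos : 0 < β x₀ - β x := sub_pos.mpr hlt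
        have ht : 0 < 1 + μ + lam - β x := by linarith
        have hvx : v x = c / (1 + μ + lam - β x) := by
          field_simp
          linarith [hkey x (hsub hx)]
        have hle : v x ≤ c / (β x₀ - β x) := by
          rw [hvx]
          gcongr
          linarith
        calc ENNReal.ofReal (v x) ≤ ENNReal.ofReal (c / (β x₀ - β x)) :=
              ENNReal.ofReal_le_ofReal hle
          _ = ENNReal.ofReal c * (ENNReal.ofReal (β x₀ - β x))⁻¹ := by
              rw [ENNReal.ofReal_div_of_pos hpos, div_eq_mul_inv]
      · rw [heqβ]
        simp only [sub_self, ENNReal.ofReal_zero, ENNReal.inv_zero]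
        rw [ENNReal.mul_top (by simpa using hcpos)]
        exact le_top
    have hmono : (∫⁻ x in Ω, ENNReal.ofReal (v x)) ≤
        ∫⁻ x in Ω, ENNReal.ofReal c * (ENNReal.ofReal (β x₀ - β x))⁻¹ :=
      lintegral_mono_ae (ae_restrict_of_forall_mem hΩo.measurableSet hptwise)
    have hconst : (∫⁻ x in Ω, ENNReal.ofReal c * (ENNReal.ofReal (β x₀ - β x))⁻¹) =
        ENNReal.ofReal c * ∫⁻ x in Ω, (ENNReal.ofReal (β x₀ - β x))⁻¹ :=
      lintegral_const_mul' _ _ ENNReal.ofReal_ne_top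
    have habs : ENNReal.ofReal c < ENNReal.ofReal c := by
      calc ENNReal.ofReal c = ENNReal.ofReal ρ * ENNReal.ofReal I := by
            rw [hc, ENNReal.ofReal_mul hρ.le]
        _ = ENNReal.ofReal ρ * ∫⁻ x in Ω, ENNReal.ofReal (v x) := by rw [hIl]
        _ ≤ ENNReal.ofReal ρ *
              (ENNReal.ofReal c * ∫⁻ x in Ω, (ENNReal.ofReal (β x₀ - β x))⁻¹) := by
            rw [← hconst]; exact mul_le_mul_right hmono _
        _ = ENNReal.ofReal c *
              (ENNReal.ofReal ρ * ∫⁻ x in Ω, (ENNReal.ofReal (β x₀ - β x))⁻¹) := by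
            ring
        _ < ENNReal.ofReal c * 1 := by
            exact (ENNReal.mul_lt_mul_iff_right (by simpa using hcpos)
              ENNReal.ofReal_ne_top).mpr hcrit
        _ = ENNReal.ofReal c := mul_one _
    exact lt_irrefl _ habs
  · -- I = 0, so c = 0 and β ≡ β x₀ on closure Ω
    have hc0 : c = 0 := by rw [hc, ← hI0, mul_zero]
    have hβ : ∀ x ∈ closure Ω, β x = 1 + μ + lam := by
      intro x hx
      have hk := hkey x hx
      have hv := hvpos x hx
      rw [hc0, mul_eq_zero] at hk
      rcases hk with h | h
      · exact absurd h hv.ne'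
      · linarith
    have hβ0 : β x₀ = 1 + μ + lam := hβ x₀ hx₀
    have hlint : (∫⁻ x in Ω, (ENNReal.ofReal (β x₀ - β x))⁻¹) = ⊤ := by
      have : (∫⁻ x in Ω, (ENNReal.ofReal (β x₀ - β x))⁻¹) =
          ∫⁻ _ in Ω, (⊤ : ℝ≥0∞) := by
        apply setLIntegral_congr_fun hΩo.measurableSet
        intro x hx
        beta_reduce
        rw [hβ x (hsub hx), hβ0, sub_self]
        simp
      rw [this, setLIntegral_const, ENNReal.top_mul hμΩ]
    rw [hlint, ENNReal.mul_top (by simpa using hρ)] at hcrit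
    exact absurd hcrit (by simp)
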